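/- arXiv:2403.19901 — 8 statements merged into one kernel-verified Lean document; each statement's English description precedes it below -/
import Mathlib

section
/- Let R1, R2, G, Gsc > 0 be real parameters and let I_L > 0. Then there exist no real numbers x1*, x2*, x3*, x4*, x5*, u1*, u2* with x2* > 0 and x4* > 0 satisfying the equilibrium equations 0 = -R1·x1* + x5* - x2*·u1*, 0 = -G·x2* + x1*·u1* - x3*·u2*, 0 = -R2·x3* - x4* + x2*·u2*, 0 = x3* - I_L, and 0 = -Gsc·x5* - x1*. In particular, the system has no equilibrium point at which the voltages x2 and x4 are regulated to positive setpoints. -/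
/-- For a positive load current there is no equilibrium with positive regulated
voltages `x2` and `x4` in the two-stage DC-DC converter model. -/
theorem stmt_1
    (R1 R2 G Gsc IL : ℝ)
    (hR1 : 0 < R1) (hR2 : 0 < R2) (hG : 0 < G) (hGsc : 0 < Gsc) (hIL : 0 < IL) :
    ¬ ∃ x1 x2 x3 x4 x5 u1 u2 : ℝ,
      0 < x2 ∧ 0 < x4 ∧
      0 = -R1 * x1 + x5 - x2 * u1 ∧
      0 = -G * x2 + x1 * u1 - x3 * u2 ∧
      0 = -R2 * x3 - x4 + x2 * u2 ∧
      0 = x3 - IL ∧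
      0 = -Gsc * x5 - x1 := by
  rintro ⟨x1, x2, x3, x4, x5, u1, u2, h2, h4, e1, e2, e3, e5, e6⟩
  have hx3 : x3 = IL := by linarith
  subst hx3
  have hx1 : x1 = -Gsc * x5 := by linarith
  subst hx1
  have key : (-Gsc * x5) * (x2 * u1) = G * x2 ^ 2 + x3 * (x2 * u2) := by
    have := congrArg (· * x2) e2
    nlinarith [this]
  have hA : x2 * u1 = x5 * (1 + R1 * Gsc) := by nlinarith
  have hB : x2 * u2 = R2 * x3 + x4 := by linarith
  rw [hA, hB] at key
  nlinarith [sq_nonneg x5, mul_pos h2 h2, mul_pos hIL h4,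
    mul_pos hIL (mul_pos hR2 hIL), mul_pos hG (mul_pos h2 h2),
    mul_pos hR1 hGsc, mul_nonneg hGsc.le (sq_nonneg x5),
    mul_nonneg (mul_nonneg hGsc.le hR1.le) (sq_nonneg x5)]
end

section
/- Let L2, C2, R2 > 0, κ1, κ2, κ3 > 0, I_L ∈ ℝ, and x4⋆ > 0. Let x2, x3, x4, x3ref : [0,∞) → ℝ be differentiable functions with x2(t) > 0 for all t, satisfying L2·x3'(t) = -R2·x3(t) - x4(t) + x2(t)·u2(t), C2·x4'(t) = x3(t) - I_L, the dynamic extension x3ref'(t) = -(κ2/C2)·(x3(t) - I_L) - κ3·(x4(t) - x4⋆), and the control law u2(t) = (1/x2(t))·[x4(t) + R2·x3ref(t) - κ1·(x3(t) - x3ref(t)) - L2·κ3·(x4(t) - x4⋆) - (L2·κ2/C2)·(x3(t) - I_L)]. Then x4(t) → x4⋆ as t → ∞, and the functions x3 and x3ref are bounded on [0,∞). -/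
open Filter Topology Set

lemma constIci (f : ℝ → ℝ) (hf : ∀ t, (0:ℝ) ≤ t → DifferentiableAt ℝ f t)
    (h0 : ∀ t, 0 ≤ t → deriv f t = 0) : ∀ t, 0 ≤ t → f t = f 0 := by
  have hc : ContinuousOn f (Set.Ici 0) := fun t ht => (hf t ht).continuousAt.continuousWithinAt
  have hd : DifferentiableOn ℝ f (interior (Set.Ici (0:ℝ))) := by
    rw [interior_Ici]; exact fun t ht => (hf t (le_of_lt ht)).differentiableWithinAt
  have ha := antitoneOn_of_deriv_nonpos (convex_Ici 0) hc hd (by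
    rw [interior_Ici]; exact fun x hx => le_of_eq (h0 x (le_of_lt hx)))
  have hm := monotoneOn_of_deriv_nonneg (convex_Ici 0) hc hd (by
    rw [interior_Ici]; exact fun x hx => ge_of_eq (h0 x (le_of_lt hx)))
  intro t ht
  exact le_antisymm (ha self_mem_Ici ht ht) (hm self_mem_Ici ht ht)

lemma gron (V : ℝ → ℝ) (cc lam G μ : ℝ) (hμ0 : 0 < μ) (hμc : μ < cc) (hμl : μ ≤ lam) (hG : 0 ≤ G)
    (hVd : ∀ t, (0:ℝ) ≤ t → DifferentiableAt ℝ V t)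
    (hVnn : ∀ t, 0 ≤ t → 0 ≤ V t)
    (hV' : ∀ t, 0 ≤ t → deriv V t ≤ -cc * V t + G * Real.exp (-lam * t)) :
    ∀ t, 0 ≤ t → Real.exp (μ*t) * V t ≤ V 0 + G * t := by
  set h : ℝ → ℝ := fun t => Real.exp (μ*t) * V t - G*t with hh
  have hder : ∀ x, (0:ℝ) ≤ x → HasDerivAt h
      (Real.exp (μ*x) * μ * V x + Real.exp (μ*x) * deriv V x - G) x := by
    intro x hx
    have h1 : HasDerivAt (fun t : ℝ => Real.exp (μ*t)) (Real.exp (μ*x) * μ) x := by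
      simpa using ((hasDerivAt_id x).const_mul μ).exp
    have h2 := (h1.mul ((hVd x hx).hasDerivAt)).sub ((hasDerivAt_id x).const_mul G)
    simp only [mul_one] at h2
    exact h2
  have hc : ContinuousOn h (Set.Ici 0) := fun t ht => ((hder t ht).continuousAt).continuousWithinAt
  have hd : DifferentiableOn ℝ h (interior (Set.Ici (0:ℝ))) := by
    rw [interior_Ici]; exact fun t ht => ((hder t ht.le).differentiableAt).differentiableWithinAt
  have ha := antitoneOn_of_deriv_nonpos (convex_Ici 0) hc hd (by
    rw [interior_Ici]
    intro x hx
    rw [(hder x hx.le).deriv]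
    have hb := hV' x hx.le
    have hp : (0:ℝ) < Real.exp (μ*x) := Real.exp_pos _
    have hV := hVnn x hx.le
    have h3 : Real.exp (μ*x) * deriv V x ≤ Real.exp (μ*x) * (-cc*V x + G*Real.exp (-lam*x)) :=
      mul_le_mul_of_nonneg_left hb hp.le
    have h4 : (μ - cc) * (Real.exp (μ*x) * V x) ≤ 0 :=
      mul_nonpos_of_nonpos_of_nonneg (by linarith) (mul_nonneg hp.le hV)
    have hE : Real.exp (μ*x) * Real.exp (-lam*x) = Real.exp (μ*x + -lam*x) := (Real.exp_add _ _).symm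
    have hE1 : Real.exp (μ*x) * Real.exp (-lam*x) ≤ 1 := by
      rw [hE, Real.exp_le_one_iff]
      have : (0:ℝ) < x := hx
      nlinarith
    have h5 : G * (Real.exp (μ*x) * Real.exp (-lam*x)) ≤ G * 1 := mul_le_mul_of_nonneg_left hE1 hG
    nlinarith)
  intro t ht
  have h6 := ha self_mem_Ici ht ht
  simp only [hh, mul_zero, Real.exp_zero, one_mul] at h6
  linarith


lemma quadPos (a c Z S : ℝ) (ha : 0 < a) (h : 1 ≤ 2*a*c) : 0 ≤ a*Z^2 + Z*S + c*S^2 := by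
  nlinarith [sq_nonneg (2*a*Z+S), mul_nonneg (by nlinarith : (0:ℝ) ≤ 4*a*c-1) (sq_nonneg S), ha]

lemma quadZ (a c Z S : ℝ) (ha : 0 < a) (h : 1 ≤ 2*a*c) :
    a*Z^2 ≤ 2*(a*Z^2 + Z*S + c*S^2) := by
  nlinarith [sq_nonneg (a*Z+S), mul_nonneg (by nlinarith : (0:ℝ) ≤ 2*a*c-1) (sq_nonneg S), ha]

lemma quadS (a c Z S : ℝ) : (4*a*c-1)*S^2 ≤ 4*a*(a*Z^2 + Z*S + c*S^2) := by
  nlinarith [sq_nonneg (2*a*Z+S)]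

lemma quadUB (a c Z S : ℝ) : a*Z^2 + Z*S + c*S^2 ≤ (max a c + 1)*(Z^2+S^2) := by
  have h1 := le_max_left a c; have h2 := le_max_right a c
  nlinarith [sq_nonneg (Z+S), sq_nonneg (Z-S),
    mul_nonneg (sub_nonneg.2 h1) (sq_nonneg Z), mul_nonneg (sub_nonneg.2 h2) (sq_nonneg S)]

lemma finalStep (k g al m cc G Z2 S2 V X E : ℝ)
    (h1 : cc*V ≤ 3*m/4*(Z2+S2)) (h2 : X ≤ m/4*(Z2+S2) + G*E)
    (h3 : 0 ≤ (k-m)*Z2) (h4 : 0 ≤ (g+2*al-m)*S2) :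
    -k*Z2 - (g+2*al)*S2 + X ≤ -cc*V + G*E := by nlinarith

lemma crossBound (m c Z S F : ℝ) (hm : 0 < m) :
    (Z + 2*c*S)*F ≤ (m/4)*(Z^2+S^2) + ((1+4*c^2)/m)*F^2 := by
  have h1 : m*((Z + 2*c*S)*F) ≤ (m^2/4)*(Z^2+S^2) + (1+4*c^2)*F^2 := by
    nlinarith [sq_nonneg (m*Z - 2*F), sq_nonneg (m*S - 4*c*F)]
  have h2 : m * (((1+4*c^2)/m)*F^2) = (1+4*c^2)*F^2 := by field_simp
  nlinarith [h1, h2, hm]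

set_option maxHeartbeats 1000000 in
/-- Lemma 2: the proposed dynamic state feedback for the subsystem Σ1 ensures
global regulation of `x4` to `x4⋆` with `x3` and `x3ref` bounded. -/
theorem stmt_3
    (L2 C2 R2 κ1 κ2 κ3 IL x4s : ℝ)
    (hL2 : 0 < L2) (hC2 : 0 < C2) (hR2 : 0 < R2)
    (hκ1 : 0 < κ1) (hκ2 : 0 < κ2) (hκ3 : 0 < κ3) (hx4s : 0 < x4s)
    (x2 x3 x4 x3ref u2 : ℝ → ℝ)
    (hd2 : ∀ t, 0 ≤ t → DifferentiableAt ℝ x2 t)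
    (hd3 : ∀ t, 0 ≤ t → DifferentiableAt ℝ x3 t)
    (hd4 : ∀ t, 0 ≤ t → DifferentiableAt ℝ x4 t)
    (hdref : ∀ t, 0 ≤ t → DifferentiableAt ℝ x3ref t)
    (hx2pos : ∀ t, 0 ≤ t → 0 < x2 t)
    (hode3 : ∀ t, 0 ≤ t → L2 * deriv x3 t = -R2 * x3 t - x4 t + x2 t * u2 t)
    (hode4 : ∀ t, 0 ≤ t → C2 * deriv x4 t = x3 t - IL)
    (href : ∀ t, 0 ≤ t →
      deriv x3ref t = -(κ2 / C2) * (x3 t - IL) - κ3 * (x4 t - x4s))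
    (hu2 : ∀ t, 0 ≤ t →
      u2 t = (1 / x2 t) * (x4 t + R2 * x3ref t - κ1 * (x3 t - x3ref t)
        - L2 * κ3 * (x4 t - x4s) - (L2 * κ2 / C2) * (x3 t - IL))) :
    Tendsto x4 atTop (𝓝 x4s) ∧
    (∃ M : ℝ, ∀ t, 0 ≤ t → |x3 t| ≤ M) ∧
    (∃ M : ℝ, ∀ t, 0 ≤ t → |x3ref t| ≤ M) := by
  -- constants
  set el : ℝ := (R2 + κ1)/L2 with hel_def
  have hel : 0 < el := by positivity
  set al : ℝ := κ2/C2 with hal_def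
  have hal : 0 < al := by positivity
  set ga : ℝ := 1/C2 with hga_def
  have hga : 0 < ga := by positivity
  set cq : ℝ := 1/κ2 + 1 with hcq_def
  have hcq : 0 < cq := by positivity
  set aq : ℝ := C2*(al + 2*cq*κ3)/2 with haq_def
  have haq : 0 < aq := by positivity
  have hqc : 2*aq*cq ≥ 1 + κ2 := by
    have h1 : C2*al*cq = 1 + κ2 := by
      rw [hal_def, hcq_def]; field_simp
    have h2 : 2*aq*cq = C2*al*cq + 2*C2*cq^2*κ3 := by rw [haq_def]; ring
    nlinarith [mul_pos (mul_pos hC2 (mul_pos hcq hcq)) hκ3]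
  -- error signals
  set z : ℝ → ℝ := fun t => x4 t - x4s with hz_def
  set sg : ℝ → ℝ := fun t => x3 t - IL with hsg_def
  set e : ℝ → ℝ := fun t => x3 t - x3ref t with he_def
  -- derivative formulas
  have hx4' : ∀ t, 0 ≤ t → deriv x4 t = sg t / C2 := by
    intro t ht
    have h := hode4 t ht
    field_simp [hsg_def]
    linarith
  have hx3' : ∀ t, 0 ≤ t →
      deriv x3 t = -el * e t - κ3 * z t - al * sg t := by
    intro t ht
    have h := hode3 t ht
    rw [hu2 t ht] at h
    have hx2 : x2 t ≠ 0 := ne_of_gt (hx2pos t ht)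
    have h2 : x2 t * (1 / x2 t *
        (x4 t + R2 * x3ref t - κ1 * (x3 t - x3ref t)
          - L2 * κ3 * (x4 t - x4s) - L2 * κ2 / C2 * (x3 t - IL)))
        = x4 t + R2 * x3ref t - κ1 * (x3 t - x3ref t)
          - L2 * κ3 * (x4 t - x4s) - L2 * κ2 / C2 * (x3 t - IL) := by
      field_simp
    rw [h2] at h
    have hL2' : L2 ≠ 0 := ne_of_gt hL2
    have hC2' : C2 ≠ 0 := ne_of_gt hC2
    have key : L2 * (-el * e t - κ3 * z t - al * sg t)
        = -R2 * x3 t - x4 t + (x4 t + R2 * x3ref t - κ1 * (x3 t - x3ref t)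
          - L2 * κ3 * (x4 t - x4s) - L2 * κ2 / C2 * (x3 t - IL)) := by
      simp only [hz_def, hsg_def, he_def, hel_def, hal_def]
      field_simp
      ring
    exact mul_left_cancel₀ hL2' (h.trans key.symm)
  have he' : ∀ t, 0 ≤ t → deriv e t = -el * e t := by
    intro t ht
    have hd := deriv_fun_sub (hd3 t ht) (hdref t ht)
    simp only [he_def]
    rw [hd, hx3' t ht, href t ht]
    simp only [hz_def, hsg_def, he_def]
    ring
  -- exponential decay of e
  have hC2' : C2 ≠ 0 := ne_of_gt hC2
  have hκ2' : κ2 ≠ 0 := ne_of_gt hκ2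
  have hediff : ∀ t, (0:ℝ) ≤ t → DifferentiableAt ℝ e t := by
    intro t ht; simp only [he_def]; exact (hd3 t ht).sub (hdref t ht)
  have hee : ∀ t, 0 ≤ t → e t = e 0 * Real.exp (-el*t) := by
    have hEconst := constIci (fun t => Real.exp (el*t) * e t)
      (fun t ht => (((Real.differentiable_exp.comp
        (differentiable_id.const_mul el)).differentiableAt)).mul (hediff t ht))
      (by
        intro t ht
        have h1 : HasDerivAt (fun u : ℝ => Real.exp (el*u)) (Real.exp (el*t) * el) t := by
          simpa using ((hasDerivAt_id t).const_mul el).exp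
        have h2 := h1.mul ((hediff t ht).hasDerivAt)
        rw [show (fun t => Real.exp (el * t) * e t) = (fun u => Real.exp (el*u)) * e from rfl, h2.deriv, he' t ht]
        ring)
    intro t ht
    have h3 := hEconst t ht
    simp only [mul_zero, Real.exp_zero, one_mul] at h3
    have h4 : Real.exp (-el*t) = (Real.exp (el*t))⁻¹ := by
      rw [← Real.exp_neg]; ring_nf
    rw [h4, ← h3]
    field_simp
  -- Lyapunov function
  set Vf : ℝ → ℝ := fun t => aq*(z t)^2 + z t * sg t + cq*(sg t)^2 with hV_def
  have hVder : ∀ t, 0 ≤ t → HasDerivAt Vf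
      (-κ3*(z t)^2 - (ga + 2*al)*(sg t)^2 + (z t + 2*cq*(sg t))*(-el * e t)) t := by
    intro t ht
    have hz4 : HasDerivAt x4 (sg t / C2) t := by
      have h := (hd4 t ht).hasDerivAt; rwa [hx4' t ht] at h
    have hzD : HasDerivAt z (sg t / C2) t := by
      simp only [hz_def]; exact hz4.sub_const x4s
    have hsD : HasDerivAt sg (-el * e t - κ3 * z t - al * sg t) t := by
      have h := (hd3 t ht).hasDerivAt; rw [hx3' t ht] at h
      simp only [hsg_def]; exact h.sub_const IL
    have h := (((hzD.pow 2).const_mul aq).add (hzD.mul hsD)).add ((hsD.pow 2).const_mul cq)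
    refine h.congr_deriv ?_
    push_cast
    rw [haq_def, hga_def, hal_def, hcq_def]
    field_simp
    ring
  have hqc1 : 1 ≤ 2*aq*cq := by linarith
  have hVnn : ∀ t, 0 ≤ Vf t := by
    intro t
    simp only [hV_def]
    exact quadPos aq cq (z t) (sg t) haq hqc1
  have h41 : 0 < 4*aq*cq - 1 := by linarith
  -- constants for the decay estimate
  set m : ℝ := min κ3 ga with hm_def
  have hm : 0 < m := lt_min hκ3 hga
  have hmκ : m ≤ κ3 := min_le_left _ _
  have hmg : m ≤ ga := min_le_right _ _
  set q : ℝ := max aq cq + 1 with hq_def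
  have hq : 0 < q := by have h5 := le_max_left aq cq; linarith
  set cc : ℝ := 3*m/(4*q) with hcc_def
  have hcc : 0 < cc := by positivity
  have hccq : cc*q = 3*m/4 := by rw [hcc_def]; field_simp
  set lam : ℝ := 2*el with hlam_def
  have hlam : 0 < lam := by positivity
  set Gc : ℝ := (1+4*cq^2)/m * (el^2 * (e 0)^2) with hGc_def
  have hGc0 : 0 ≤ Gc := by
    apply mul_nonneg (div_nonneg (by positivity) hm.le) (by positivity)
  have hVub : ∀ t, Vf t ≤ q*((z t)^2+(sg t)^2) := by
    intro t
    simp only [hV_def, hq_def]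
    exact quadUB aq cq (z t) (sg t)
  -- the decay differential inequality
  have hV'le : ∀ t, 0 ≤ t → deriv Vf t ≤ -cc*Vf t + Gc*Real.exp (-lam*t) := by
    intro t ht
    rw [(hVder t ht).deriv, hee t ht]
    set Ex : ℝ := Real.exp (-el*t) with hEx_def
    set F : ℝ := -el * (e 0 * Ex) with hF_def
    have hExx : Real.exp (-lam*t) = Ex*Ex := by
      have h5 : -lam*t = (-el*t) + (-el*t) := by rw [hlam_def]; ring
      rw [h5, Real.exp_add]
    have h1 : cc * Vf t ≤ (3*m/4)*((z t)^2+(sg t)^2) := by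
      calc cc * Vf t ≤ cc*(q*((z t)^2+(sg t)^2)) :=
            mul_le_mul_of_nonneg_left (hVub t) hcc.le
        _ = (cc*q)*((z t)^2+(sg t)^2) := by ring
        _ = (3*m/4)*((z t)^2+(sg t)^2) := by rw [hccq]
    have hGeq : ((1+4*cq^2)/m)*F^2 = Gc*Real.exp (-lam*t) := by
      rw [hExx, hGc_def, hF_def]
      ring
    have h2 : (z t + 2*cq*(sg t))*F ≤ (m/4)*((z t)^2+(sg t)^2) + Gc*Real.exp (-lam*t) := by
      have h6 := crossBound m cq (z t) (sg t) F hm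
      rw [hGeq] at h6
      exact h6
    have h3 : 0 ≤ (κ3 - m)*(z t)^2 := mul_nonneg (by linarith) (sq_nonneg _)
    have h4 : 0 ≤ (ga + 2*al - m)*(sg t)^2 :=
      mul_nonneg (by linarith) (sq_nonneg _)
    exact finalStep κ3 ga al m cc Gc ((z t)^2) ((sg t)^2) (Vf t) _ _ h1 h2 h3 h4
  -- decay rate
  set μ : ℝ := min cc lam / 2 with hμ_def
  have hμ0 : 0 < μ := by
    have := lt_min hcc hlam; rw [hμ_def]; linarith
  have hμc : μ < cc := by
    have h5 := min_le_left cc lam; rw [hμ_def]; linarith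
  have hμl : μ ≤ lam := by
    have h5 := min_le_right cc lam; rw [hμ_def]; linarith
  have hgron := gron Vf cc lam Gc μ hμ0 hμc hμl hGc0
    (fun t ht => (hVder t ht).differentiableAt) (fun t _ => hVnn t) hV'le
  have hVle : ∀ t, 0 ≤ t → Vf t ≤ (Vf 0 + Gc*t)*Real.exp (-(μ*t)) := by
    intro t ht
    have hid : Real.exp (-(μ*t)) * Real.exp (μ*t) = 1 := by
      rw [← Real.exp_add]; simp
    have h7 : Real.exp (-(μ*t)) * (Real.exp (μ*t) * Vf t) = Vf t := by
      rw [← mul_assoc, hid, one_mul]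
    have h8 := mul_le_mul_of_nonneg_left (hgron t ht) (Real.exp_pos (-(μ*t))).le
    calc Vf t = Real.exp (-(μ*t)) * (Real.exp (μ*t) * Vf t) := h7.symm
      _ ≤ Real.exp (-(μ*t)) * (Vf 0 + Gc*t) := h8
      _ = (Vf 0 + Gc*t)*Real.exp (-(μ*t)) := by ring
  -- Tendsto x4
  have hμt : Tendsto (fun t : ℝ => μ*t) atTop atTop :=
    Tendsto.const_mul_atTop hμ0 tendsto_id
  have hexp : Tendsto (fun t : ℝ => Real.exp (-(μ*t))) atTop (𝓝 0) :=
    Real.tendsto_exp_neg_atTop_nhds_zero.comp hμt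
  have hlin : Tendsto (fun t : ℝ => (μ*t)*Real.exp (-(μ*t))) atTop (𝓝 0) := by
    have hp1 : Tendsto (fun x : ℝ => x * Real.exp (-x)) atTop (𝓝 0) := by
      simpa using Real.tendsto_pow_mul_exp_neg_atTop_nhds_zero 1
    exact hp1.comp hμt
  have htend0 : Tendsto (fun t : ℝ => (Vf 0 + Gc*t)*Real.exp (-(μ*t))) atTop (𝓝 0) := by
    have h1 : Tendsto (fun t:ℝ => Vf 0 * Real.exp (-(μ*t))
        + Gc * ((1/μ) * ((μ*t)*Real.exp (-(μ*t))))) atTop (𝓝 (Vf 0 * 0 + Gc*((1/μ)*0))) :=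
      (hexp.const_mul _).add ((hlin.const_mul _).const_mul _)
    simp only [mul_zero, add_zero] at h1
    refine h1.congr fun t => ?_
    have hμ' : μ ≠ 0 := ne_of_gt hμ0
    field_simp
  have hVtend : Tendsto Vf atTop (𝓝 0) := by
    apply squeeze_zero' (g := fun t => (Vf 0 + Gc*t)*Real.exp (-(μ*t)))
    · exact Eventually.of_forall (fun t => hVnn t)
    · filter_upwards [eventually_ge_atTop (0:ℝ)] with t ht
      exact hVle t ht
    · exact htend0
  have hzV : ∀ t, aq*(z t)^2 ≤ 2*Vf t := by
    intro t
    simp only [hV_def]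
    exact quadZ aq cq (z t) (sg t) haq hqc1
  have hz2tend : Tendsto (fun t => (z t)^2) atTop (𝓝 0) := by
    have haz : Tendsto (fun t => (2/aq)*Vf t) atTop (𝓝 0) := by
      simpa using hVtend.const_mul (2/aq)
    apply squeeze_zero' (g := fun t => (2/aq)*Vf t)
    · exact Eventually.of_forall fun t => sq_nonneg _
    · refine Eventually.of_forall fun t => ?_
      have h9 := hzV t
      rw [show (2:ℝ)/aq*Vf t = (2*Vf t)/aq by ring, le_div_iff₀ haq]
      linarith [mul_le_mul_of_nonneg_right h9 haq.le]
    · exact haz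
  have htend4 : Tendsto x4 atTop (𝓝 x4s) := by
    rw [tendsto_iff_dist_tendsto_zero]
    have hs := (Real.continuous_sqrt.tendsto 0).comp hz2tend
    rw [Real.sqrt_zero] at hs
    refine hs.congr fun t => ?_
    simp only [Function.comp_apply, Real.sqrt_sq_eq_abs, Real.dist_eq, hz_def]
  have hVbd : ∀ t, 0 ≤ t → Vf t ≤ Vf 0 + Gc*(1/μ) := by
    intro t ht
    have ht2 : Real.exp (-(μ*t)) ≤ 1 :=
      Real.exp_le_one_iff.mpr (neg_nonpos.mpr (mul_nonneg hμ0.le ht))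
    have ht1 : t * Real.exp (-(μ*t)) ≤ 1/μ := by
      rw [Real.exp_neg]
      rw [show t * (Real.exp (μ*t))⁻¹ = t / Real.exp (μ*t) from (div_eq_mul_inv t _)]
      rw [div_le_div_iff₀ (Real.exp_pos _) hμ0]
      have h20 := Real.add_one_le_exp (μ*t)
      nlinarith [h20]
    have h11 : Vf 0 * Real.exp (-(μ*t)) ≤ Vf 0 * 1 :=
      mul_le_mul_of_nonneg_left ht2 (hVnn 0)
    have h12 : Gc*(t*Real.exp (-(μ*t))) ≤ Gc*(1/μ) := mul_le_mul_of_nonneg_left ht1 hGc0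
    calc Vf t ≤ (Vf 0 + Gc*t)*Real.exp (-(μ*t)) := hVle t ht
      _ = Vf 0 * Real.exp (-(μ*t)) + Gc*(t*Real.exp (-(μ*t))) := by ring
      _ ≤ Vf 0 * 1 + Gc*(1/μ) := add_le_add h11 h12
      _ = Vf 0 + Gc*(1/μ) := by ring
  set Mv : ℝ := Vf 0 + Gc*(1/μ) with hMv_def
  set B : ℝ := (4*aq*Mv)/(4*aq*cq-1) with hB_def
  have hs2 : ∀ t, 0 ≤ t → (sg t)^2 ≤ B := by
    intro t ht
    rw [hB_def, le_div_iff₀ h41]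
    have h14 : (4*aq*cq-1)*(sg t)^2 ≤ 4*aq*(Vf t) := by
      simp only [hV_def]; exact quadS aq cq (z t) (sg t)
    have h15 := mul_le_mul_of_nonneg_left (hVbd t ht) (by positivity : (0:ℝ) ≤ 4*aq)
    calc (sg t)^2 * (4*aq*cq-1) = (4*aq*cq-1)*(sg t)^2 := by ring
      _ ≤ 4*aq*(Vf t) := h14
      _ ≤ 4*aq*Mv := h15
  have habs : ∀ t, 0 ≤ t → |sg t| ≤ Real.sqrt B := by
    intro t ht
    rw [← Real.sqrt_sq_eq_abs]
    exact Real.sqrt_le_sqrt (hs2 t ht)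
  have heb : ∀ t, 0 ≤ t → |e t| ≤ |e 0| := by
    intro t ht
    rw [hee t ht, abs_mul, Real.abs_exp]
    have h21 : Real.exp (-el*t) ≤ 1 := by
      rw [Real.exp_le_one_iff]
      have := mul_nonneg hel.le ht
      linarith
    calc |e 0| * Real.exp (-el*t) ≤ |e 0| * 1 :=
          mul_le_mul_of_nonneg_left h21 (abs_nonneg _)
      _ = |e 0| := mul_one _
  refine ⟨htend4, ⟨Real.sqrt B + |IL|, ?_⟩, ⟨Real.sqrt B + |IL| + |e 0|, ?_⟩⟩
  · intro t ht
    have h22 := habs t ht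
    have h16 : x3 t = sg t + IL := by simp only [hsg_def]; ring
    rw [h16]
    calc |sg t + IL| ≤ |sg t| + |IL| := abs_add_le _ _
      _ ≤ Real.sqrt B + |IL| := by linarith
  · intro t ht
    have h22 := habs t ht
    have h23 := heb t ht
    have h17 : x3ref t = (sg t + IL) - e t := by simp only [hsg_def, he_def]; ring
    rw [h17]
    calc |(sg t + IL) - e t| ≤ |sg t + IL| + |e t| := abs_sub _ _
      _ ≤ (|sg t| + |IL|) + |e 0| := add_le_add (abs_add_le _ _) h23
      _ ≤ Real.sqrt B + |IL| + |e 0| := by linarith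
end

section
/- Let L2, C2, R2 > 0, κ1, κ2, κ3 > 0, I_L ∈ ℝ, and x4⋆ ∈ ℝ. Let x2, x3, x4, x3ref : [0,∞) → ℝ be differentiable functions with x2(t) > 0 for all t, satisfying L2·x3'(t) = -R2·x3(t) - x4(t) + x2(t)·u2(t), x3ref'(t) = -(κ2/C2)·(x3(t) - I_L) - κ3·(x4(t) - x4⋆), and u2(t) = (1/x2(t))·[x4(t) + R2·x3ref(t) - κ1·(x3(t) - x3ref(t)) - L2·κ3·(x4(t) - x4⋆) - (L2·κ2/C2)·(x3(t) - I_L)]. Then the error x̃3(t) := x3(t) - x3ref(t) satisfies the linear equation L2·x̃3'(t) = -(R2 + κ1)·x̃3(t) for all t ≥ 0, and consequently x̃3(t) = x̃3(0)·exp(-(R2 + κ1)·t/L2), so x̃3(t) → 0 as t → ∞. -/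
open Filter Topology

/-- Under the Σ1 control law, the current error `x̃3 = x3 - x3ref` obeys the
linear equation `L2·x̃3' = -(R2 + κ1)·x̃3`, hence decays exponentially to zero. -/
theorem stmt_4
    (L2 C2 R2 κ1 κ2 κ3 IL x4s : ℝ)
    (hL2 : 0 < L2) (hC2 : 0 < C2) (hR2 : 0 < R2)
    (hκ1 : 0 < κ1) (hκ2 : 0 < κ2) (hκ3 : 0 < κ3)
    (x2 x3 x4 x3ref u2 : ℝ → ℝ)
    (hd2 : ∀ t, 0 ≤ t → DifferentiableAt ℝ x2 t)
    (hd3 : ∀ t, 0 ≤ t → DifferentiableAt ℝ x3 t)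
    (hd4 : ∀ t, 0 ≤ t → DifferentiableAt ℝ x4 t)
    (hdref : ∀ t, 0 ≤ t → DifferentiableAt ℝ x3ref t)
    (hx2pos : ∀ t, 0 ≤ t → 0 < x2 t)
    (hode3 : ∀ t, 0 ≤ t → L2 * deriv x3 t = -R2 * x3 t - x4 t + x2 t * u2 t)
    (href : ∀ t, 0 ≤ t →
      deriv x3ref t = -(κ2 / C2) * (x3 t - IL) - κ3 * (x4 t - x4s))
    (hu2 : ∀ t, 0 ≤ t →
      u2 t = (1 / x2 t) * (x4 t + R2 * x3ref t - κ1 * (x3 t - x3ref t)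
        - L2 * κ3 * (x4 t - x4s) - (L2 * κ2 / C2) * (x3 t - IL))) :
    (∀ t, 0 ≤ t →
      L2 * deriv (fun s => x3 s - x3ref s) t = -(R2 + κ1) * (x3 t - x3ref t)) ∧
    (∀ t, 0 ≤ t →
      x3 t - x3ref t = (x3 0 - x3ref 0) * Real.exp (-(R2 + κ1) * t / L2)) ∧
    Tendsto (fun t => x3 t - x3ref t) atTop (𝓝 0) := by
  have hL : L2 ≠ 0 := hL2.ne'
  have hC : C2 ≠ 0 := hC2.ne'
  set a : ℝ := (R2 + κ1) / L2 with ha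
  have hapos : 0 < a := div_pos (by linarith) hL2
  -- key derivative fact
  have hkey : ∀ t, 0 ≤ t →
      HasDerivAt (fun s => x3 s - x3ref s) (-a * (x3 t - x3ref t)) t := by
    intro t ht
    have hx2 : x2 t ≠ 0 := (hx2pos t ht).ne'
    have h2 := href t ht
    have h1 : L2 * deriv x3 t = -R2 * x3 t - x4 t
        + (x4 t + R2 * x3ref t - κ1 * (x3 t - x3ref t)
          - L2 * κ3 * (x4 t - x4s) - (L2 * κ2 / C2) * (x3 t - IL)) := by
      rw [hode3 t ht, hu2 t ht]
      field_simp
    have hder : deriv x3 t = -a * (x3 t - x3ref t) + deriv x3ref t := by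
      have hdx : deriv x3 t = (L2 * deriv x3 t) / L2 := by field_simp
      rw [h2, ha, hdx, h1]
      field_simp
      ring
    have := ((hd3 t ht).hasDerivAt).sub ((hdref t ht).hasDerivAt)
    rw [hder] at this
    refine this.congr_deriv ?_
    ring
  have hsol : ∀ t, 0 ≤ t →
      x3 t - x3ref t = (x3 0 - x3ref 0) * Real.exp (-(R2 + κ1) * t / L2) := by
    intro t ht
    set g : ℝ → ℝ := fun s => (x3 s - x3ref s) * Real.exp (a * s) with hg
    have hgder : ∀ s, 0 ≤ s → HasDerivAt g 0 s := by
      intro s hs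
      have he : HasDerivAt (fun r => Real.exp (a * r)) (Real.exp (a * s) * a) s :=
        HasDerivAt.exp (by simpa using (hasDerivAt_id s).const_mul a)
      have := (hkey s hs).mul he
      refine this.congr_deriv ?_
      ring
    have hconst : g t = g 0 :=
      constant_of_has_deriv_right_zero
        (fun s hs => ((hgder s hs.1).continuousAt).continuousWithinAt)
        (fun s hs => ((hgder s hs.1).hasDerivWithinAt)) t ⟨ht, le_refl t⟩
    have h0 : (x3 t - x3ref t) * Real.exp (a * t) = x3 0 - x3ref 0 := by
      simpa [hg] using hconst
    have harg : -(R2 + κ1) * t / L2 = -(a * t) := by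
      rw [ha]
      field_simp
    rw [harg, Real.exp_neg, ← h0]
    field_simp
  refine ⟨?_, hsol, ?_⟩
  · intro t ht
    rw [(hkey t ht).deriv, ha]
    field_simp
  · have hlin : Tendsto (fun t : ℝ => -(R2 + κ1) * t / L2) atTop atBot := by
      have h1 : Tendsto (fun t : ℝ => -(R2 + κ1) * t) atTop atBot :=
        (tendsto_const_mul_atBot_of_neg (by linarith : -(R2 + κ1) < 0)).2 tendsto_id
      exact (tendsto_div_const_atBot_of_pos hL2).2 h1
    have hexp : Tendsto (fun t : ℝ => (x3 0 - x3ref 0) * Real.exp (-(R2 + κ1) * t / L2))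
        atTop (𝓝 0) := by
      have := (Real.tendsto_exp_atBot.comp hlin).const_mul (x3 0 - x3ref 0)
      simpa using this
    refine Tendsto.congr' ?_ hexp
    filter_upwards [eventually_ge_atTop (0 : ℝ)] with t ht
    exact (hsol t ht).symm
end

section
/- Let L2, C2, R2 > 0, κ1, κ2, κ3 > 0, I_L ∈ ℝ, and x4⋆ ∈ ℝ. Let x2, x3, x4, x3ref : [0,∞) → ℝ be differentiable with x2(t) > 0, satisfying L2·x3'(t) = -R2·x3(t) - x4(t) + x2(t)·u2(t), C2·x4'(t) = x3(t) - I_L, x3ref'(t) = -(κ2/C2)·(x3(t) - I_L) - κ3·(x4(t) - x4⋆), and u2(t) = (1/x2(t))·[x4(t) + R2·x3ref(t) - κ1·(x3(t) - x3ref(t)) - L2·κ3·(x4(t) - x4⋆) - (L2·κ2/C2)·(x3(t) - I_L)]. Define x̃3 := x3 - x3ref, x̃4 := x4 - x4⋆, z := -(1/κ3)·(x3ref + κ2·x̃4), and z̃ := z + I_L/κ3. Then for all t ≥ 0 the vector χ = (x̃3, x̃4, z̃) satisfies the linear ODE: x̃3'(t) = -((R2 + κ1)/L2)·x̃3(t),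 x̃4'(t) = (1/C2)·(x̃3(t) - κ2·x̃4(t) - κ3·z̃(t)), and z̃'(t) = x̃4(t). -/
/-- In the coordinates `χ = (x̃3, x̃4, z̃)` the closed-loop subsystem Σ1 obeys a
linear time-invariant ODE. -/
theorem stmt_5
    (L2 C2 R2 κ1 κ2 κ3 IL x4s : ℝ)
    (hL2 : 0 < L2) (hC2 : 0 < C2) (hR2 : 0 < R2)
    (hκ1 : 0 < κ1) (hκ2 : 0 < κ2) (hκ3 : 0 < κ3)
    (x2 x3 x4 x3ref u2 : ℝ → ℝ)
    (hd2 : ∀ t, 0 ≤ t → DifferentiableAt ℝ x2 t)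
    (hd3 : ∀ t, 0 ≤ t → DifferentiableAt ℝ x3 t)
    (hd4 : ∀ t, 0 ≤ t → DifferentiableAt ℝ x4 t)
    (hdref : ∀ t, 0 ≤ t → DifferentiableAt ℝ x3ref t)
    (hx2pos : ∀ t, 0 ≤ t → 0 < x2 t)
    (hode3 : ∀ t, 0 ≤ t → L2 * deriv x3 t = -R2 * x3 t - x4 t + x2 t * u2 t)
    (hode4 : ∀ t, 0 ≤ t → C2 * deriv x4 t = x3 t - IL)
    (href : ∀ t, 0 ≤ t →
      deriv x3ref t = -(κ2 / C2) * (x3 t - IL) - κ3 * (x4 t - x4s))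
    (hu2 : ∀ t, 0 ≤ t →
      u2 t = (1 / x2 t) * (x4 t + R2 * x3ref t - κ1 * (x3 t - x3ref t)
        - L2 * κ3 * (x4 t - x4s) - (L2 * κ2 / C2) * (x3 t - IL))) :
    ∀ t, 0 ≤ t →
      deriv (fun s => x3 s - x3ref s) t
          = -((R2 + κ1) / L2) * (x3 t - x3ref t) ∧
      deriv (fun s => x4 s - x4s) t
          = (1 / C2) * ((x3 t - x3ref t) - κ2 * (x4 t - x4s)
            - κ3 * (-(1 / κ3) * (x3ref t + κ2 * (x4 t - x4s)) + IL / κ3)) ∧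
      deriv (fun s => -(1 / κ3) * (x3ref s + κ2 * (x4 s - x4s)) + IL / κ3) t
          = x4 t - x4s := by
  intro t ht
  have h2 := hx2pos t ht
  have hne : x2 t ≠ 0 := ne_of_gt h2
  have hd3t := hd3 t ht
  have hd4t := hd4 t ht
  have hdrt := hdref t ht
  have h3 : deriv x3 t = (-R2 * x3 t - x4 t + x2 t * u2 t) / L2 := by
    field_simp [ne_of_gt hL2] at *
    linarith [hode3 t ht]
  have h4 : deriv x4 t = (x3 t - IL) / C2 := by
    field_simp [ne_of_gt hC2] at *
    linarith [hode4 t ht]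
  have hr := href t ht
  have hu := hu2 t ht
  refine ⟨?_, ?_, ?_⟩
  · rw [deriv_fun_sub hd3t hdrt, h3, hr, hu]
    field_simp
    ring
  · rw [deriv_fun_sub hd4t (differentiableAt_const _), deriv_const, h4]
    field_simp
    ring
  · have : deriv (fun s => -(1 / κ3) * (x3ref s + κ2 * (x4 s - x4s)) + IL / κ3) t
        = -(1 / κ3) * (deriv x3ref t + κ2 * deriv x4 t) := by
      rw [deriv_add_const]
      rw [deriv_const_mul _ (by fun_prop)]
      congr 1
      rw [deriv_fun_add hdrt (by fun_prop)]
      congr 1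
      rw [deriv_const_mul _ (by fun_prop), deriv_fun_sub hd4t (differentiableAt_const _),
        deriv_const]
      ring
    rw [this, hr, h4]
    field_simp
    ring
end

section
/- Let L2, C2, R2 > 0 and κ1, κ2, κ3 > 0 be real numbers. Then every complex eigenvalue of the real 3×3 matrix A = [[-(R2 + κ1)/L2, 0, 0], [1/C2, -κ2/C2, -κ3/C2], [0, 1, 0]] has strictly negative real part; that is, A is a Hurwitz matrix. -/
/-- The closed-loop error matrix of the subsystem Σ1 is Hurwitz: all its complex
eigenvalues have strictly negative real part. -/
theorem stmt_6
    (L2 C2 R2 κ1 κ2 κ3 : ℝ)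
    (hL2 : 0 < L2) (hC2 : 0 < C2) (hR2 : 0 < R2)
    (hκ1 : 0 < κ1) (hκ2 : 0 < κ2) (hκ3 : 0 < κ3) :
    ∀ μ : ℂ,
      μ ∈ spectrum ℂ
        ((!![-(R2 + κ1) / L2, 0, 0;
             1 / C2, -κ2 / C2, -κ3 / C2;
             0, 1, 0] : Matrix (Fin 3) (Fin 3) ℝ).map (Complex.ofReal)) →
      μ.re < 0 := by
  intro μ hμ
  rw [spectrum.mem_iff, Matrix.isUnit_iff_isUnit_det, isUnit_iff_ne_zero, not_not,
    Matrix.det_fin_three] at hμ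
  simp [Matrix.map_apply, Matrix.sub_apply, Matrix.algebraMap_matrix_apply] at hμ
  have hfac : (μ - ((-(R2 + κ1) / L2 : ℝ) : ℂ)) *
      (μ ^ 2 + ((κ2 / C2 : ℝ) : ℂ) * μ + ((κ3 / C2 : ℝ) : ℂ)) = 0 := by
    push_cast
    ring_nf
    ring_nf at hμ
    linear_combination hμ
  have hp : (0 : ℝ) < κ2 / C2 := by positivity
  have hq : (0 : ℝ) < κ3 / C2 := by positivity
  rcases mul_eq_zero.mp hfac with h | h
  · rw [sub_eq_zero] at h
    subst h
    rw [Complex.ofReal_re]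
    apply div_neg_of_neg_of_pos _ hL2
    linarith
  · by_contra hcon
    push_neg at hcon
    rw [Complex.ext_iff] at h
    obtain ⟨h1, h2⟩ := h
    simp [pow_two, Complex.mul_re, Complex.mul_im, Complex.add_re, Complex.add_im,
      Complex.ofReal_re, Complex.ofReal_im] at h1 h2
    set x := μ.re
    set y := μ.im
    have hy : y = 0 := by
      rcases mul_eq_zero.mp (show y * (2 * x + κ2 / C2) = 0 by linarith) with h | h
      · exact h
      · nlinarith
    nlinarith
end

section
/- Let L1, C1, Csc > 0 and R1, Gsc ≥ 0, G ≥ 0 be real parameters. Let x1, x2, x3, x5, u1, u2 : [0,∞) → ℝ be functions, with x1, x2, x5 differentiable and x3·u2·x2 locally integrable, satisfying for all t ≥ 0: L1·x1'(t) = -R1·x1(t) + x5(t) - x2(t)·u1(t), C1·x2'(t) = -G·x2(t) + x1(t)·u1(t) - x3(t)·u2(t), and Csc·x5'(t) = -Gsc·x5(t) - x1(t). Then for every T ≥ 0, ∫₀ᵀ x2(t)·(-x3(t)·u2(t)) dt ≥ G·∫₀ᵀ x2(t)^2 dt - (1/2)·(L1·x1(0)^2 + C1·x2(0)^2 + Csc·x5(0)^2).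 In particular, for all control signals u1 and u2, the map from -y := -x3·u2 to x2 is output strictly passive. -/
open MeasureTheory intervalIntegral

/-- Output strict passivity of the subsystem Σ2 with input `-x3·u2` and output
`x2`: for every `T ≥ 0` the supplied energy dominates `G` times the output
energy minus the initial stored co-energy. -/
theorem stmt_10
    (L1 C1 Csc R1 G Gsc : ℝ)
    (hL1 : 0 < L1) (hC1 : 0 < C1) (hCsc : 0 < Csc)
    (hR1 : 0 ≤ R1) (hG : 0 ≤ G) (hGsc : 0 ≤ Gsc)
    (x1 x2 x3 x5 u1 u2 : ℝ → ℝ)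
    (hd1 : ∀ t, 0 ≤ t → DifferentiableAt ℝ x1 t)
    (hd2 : ∀ t, 0 ≤ t → DifferentiableAt ℝ x2 t)
    (hd5 : ∀ t, 0 ≤ t → DifferentiableAt ℝ x5 t)
    (hint : ∀ T, 0 ≤ T →
      IntervalIntegrable (fun t => x3 t * u2 t * x2 t) volume 0 T)
    (h1 : ∀ t, 0 ≤ t → L1 * deriv x1 t = -R1 * x1 t + x5 t - x2 t * u1 t)
    (h2 : ∀ t, 0 ≤ t → C1 * deriv x2 t = -G * x2 t + x1 t * u1 t - x3 t * u2 t)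
    (h5 : ∀ t, 0 ≤ t → Csc * deriv x5 t = -Gsc * x5 t - x1 t) :
    ∀ T, 0 ≤ T →
      (∫ t in (0 : ℝ)..T, x2 t * (-(x3 t * u2 t)))
        ≥ G * (∫ t in (0 : ℝ)..T, (x2 t) ^ 2)
          - (1 / 2) * (L1 * (x1 0) ^ 2 + C1 * (x2 0) ^ 2 + Csc * (x5 0) ^ 2) := by
  intro T hT
  have hicc : Set.uIcc (0:ℝ) T = Set.Icc 0 T := Set.uIcc_of_le hT
  have hcont1 : ContinuousOn x1 (Set.uIcc 0 T) := by
    rw [hicc]; exact fun t ht => ((hd1 t ht.1).continuousAt).continuousWithinAt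
  have hcont2 : ContinuousOn x2 (Set.uIcc 0 T) := by
    rw [hicc]; exact fun t ht => ((hd2 t ht.1).continuousAt).continuousWithinAt
  have hcont5 : ContinuousOn x5 (Set.uIcc 0 T) := by
    rw [hicc]; exact fun t ht => ((hd5 t ht.1).continuousAt).continuousWithinAt
  have hi1 : IntervalIntegrable (fun t => R1 * (x1 t)^2) volume 0 T :=
    (continuousOn_const.mul (hcont1.pow 2)).intervalIntegrable
  have hi2 : IntervalIntegrable (fun t => (x2 t)^2) volume 0 T :=
    (hcont2.pow 2).intervalIntegrable
  have hi5 : IntervalIntegrable (fun t => Gsc * (x5 t)^2) volume 0 T :=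
    (continuousOn_const.mul (hcont5.pow 2)).intervalIntegrable
  have hiy : IntervalIntegrable (fun t => x3 t * u2 t * x2 t) volume 0 T := hint T hT
  have hig : IntervalIntegrable (fun t =>
      -(R1 * (x1 t)^2) - G * (x2 t)^2 - Gsc * (x5 t)^2 - x3 t * u2 t * x2 t) volume 0 T :=
    ((hi1.neg.sub (hi2.const_mul G)).sub hi5).sub hiy
  have hftc : (∫ t in (0:ℝ)..T,
        (-(R1 * (x1 t)^2) - G * (x2 t)^2 - Gsc * (x5 t)^2 - x3 t * u2 t * x2 t))
      = (1/2) * (L1 * (x1 T)^2 + C1 * (x2 T)^2 + Csc * (x5 T)^2)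
        - (1/2) * (L1 * (x1 0)^2 + C1 * (x2 0)^2 + Csc * (x5 0)^2) := by
    refine integral_eq_sub_of_hasDerivAt (f := fun t =>
      (1/2) * (L1 * (x1 t)^2 + C1 * (x2 t)^2 + Csc * (x5 t)^2)) ?_ hig
    intro t ht
    rw [hicc] at ht
    have ht0 : 0 ≤ t := ht.1
    have H1 := ((hd1 t ht0).hasDerivAt.pow 2).const_mul L1
    have H2 := ((hd2 t ht0).hasDerivAt.pow 2).const_mul C1
    have H5 := ((hd5 t ht0).hasDerivAt.pow 2).const_mul Csc
    have H := ((H1.add H2).add H5).const_mul ((1:ℝ)/2)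
    refine H.congr_deriv (Eq.symm ?_)
    have e1 := h1 t ht0
    have e2 := h2 t ht0
    have e5 := h5 t ht0
    linear_combination (-(x1 t)) * e1 + (-(x2 t)) * e2 + (-(x5 t)) * e5
  have split : (∫ t in (0:ℝ)..T,
        (-(R1 * (x1 t)^2) - G * (x2 t)^2 - Gsc * (x5 t)^2 - x3 t * u2 t * x2 t))
      = -(∫ t in (0:ℝ)..T, R1 * (x1 t)^2) - G * (∫ t in (0:ℝ)..T, (x2 t)^2)
        - (∫ t in (0:ℝ)..T, Gsc * (x5 t)^2) - (∫ t in (0:ℝ)..T, x3 t * u2 t * x2 t) := by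
    have hi1n : IntervalIntegrable (fun t => -(R1 * (x1 t)^2)) volume 0 T := hi1.neg
    rw [integral_sub ((hi1n.sub (hi2.const_mul G)).sub hi5) hiy,
        integral_sub (hi1n.sub (hi2.const_mul G)) hi5,
        integral_sub hi1n (hi2.const_mul G), intervalIntegral.integral_neg,
        intervalIntegral.integral_const_mul, intervalIntegral.integral_const_mul]
  have hA : 0 ≤ ∫ t in (0:ℝ)..T, R1 * (x1 t)^2 :=
    intervalIntegral.integral_nonneg hT (fun t _ => mul_nonneg hR1 (sq_nonneg _))
  have hC : 0 ≤ ∫ t in (0:ℝ)..T, Gsc * (x5 t)^2 :=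
    intervalIntegral.integral_nonneg hT (fun t _ => mul_nonneg hGsc (sq_nonneg _))
  have hVT : 0 ≤ (1/2) * (L1 * (x1 T)^2 + C1 * (x2 T)^2 + Csc * (x5 T)^2) := by positivity
  have hLHS : (∫ t in (0:ℝ)..T, x2 t * (-(x3 t * u2 t)))
      = -(∫ t in (0:ℝ)..T, x3 t * u2 t * x2 t) := by
    rw [← intervalIntegral.integral_neg]
    exact integral_congr (fun t _ => by ring)
  rw [hLHS]
  linarith [hftc, split]
end

section
/- Let L1 > 0, R1 ≥ 0, κ4 > 0, κ5 ∈ ℝ, and x2⋆ ∈ ℝ. Let x1, x2, x5, u1 : [0,∞) → ℝ with x1 differentiable and x2 differentiable and x2(t) > 0 for all t, satisfying L1·x1'(t) = -R1·x1(t) + x5(t) - x2(t)·u1(t) together with the control law u1(t) = (1/x2(t))·[x5(t) + κ4·(x1(t) - x1ref(t)) + w(t)], where x1ref(t) := -κ5·(x2(t) - x2⋆) and w(t) := -L1·x1ref'(t) - R1·x1ref(t). Then the error x̃1(t) := x1(t) - x1ref(t) satisfies L1·x̃1'(t) = -(R1 + κ4)·x̃1(t) for all t ≥ 0; consequently x̃1(t)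 = x̃1(0)·exp(-(R1 + κ4)·t/L1) and x̃1(t) → 0 as t → ∞. -/
open Filter Topology

/-- Under the Σ2 control law, the current error `x̃1 = x1 - x1ref` obeys
`L1·x̃1' = -(R1 + κ4)·x̃1`, hence decays exponentially to zero. -/
theorem stmt_12
    (L1 R1 κ4 κ5 x2s : ℝ)
    (hL1 : 0 < L1) (hR1 : 0 ≤ R1) (hκ4 : 0 < κ4)
    (x1 x2 x5 u1 : ℝ → ℝ)
    (hd1 : ∀ t, 0 ≤ t → DifferentiableAt ℝ x1 t)
    (hd2 : ∀ t, 0 ≤ t → DifferentiableAt ℝ x2 t)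
    (hx2pos : ∀ t, 0 ≤ t → 0 < x2 t)
    (hode1 : ∀ t, 0 ≤ t → L1 * deriv x1 t = -R1 * x1 t + x5 t - x2 t * u1 t)
    (hu1 : ∀ t, 0 ≤ t →
      u1 t = (1 / x2 t) * (x5 t + κ4 * (x1 t - (-κ5 * (x2 t - x2s)))
        + (-L1 * deriv (fun s => -κ5 * (x2 s - x2s)) t
            - R1 * (-κ5 * (x2 t - x2s))))) :
    (∀ t, 0 ≤ t →
      L1 * deriv (fun s => x1 s - (-κ5 * (x2 s - x2s))) t
        = -(R1 + κ4) * (x1 t - (-κ5 * (x2 t - x2s)))) ∧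
    (∀ t, 0 ≤ t →
      x1 t - (-κ5 * (x2 t - x2s))
        = (x1 0 - (-κ5 * (x2 0 - x2s))) * Real.exp (-(R1 + κ4) * t / L1)) ∧
    Tendsto (fun t => x1 t - (-κ5 * (x2 t - x2s))) atTop (𝓝 0) := by
  set r : ℝ → ℝ := fun s => -κ5 * (x2 s - x2s) with hr
  set e : ℝ → ℝ := fun s => x1 s - r s with he
  have hdr : ∀ t, 0 ≤ t → DifferentiableAt ℝ r t := fun t ht =>
    ((hd2 t ht).sub_const x2s).const_mul (-κ5)
  have hde : ∀ t, 0 ≤ t → DifferentiableAt ℝ e t := fun t ht =>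
    (hd1 t ht).sub (hdr t ht)
  have hderiv_e : ∀ t, 0 ≤ t → deriv e t = deriv x1 t - deriv r t := fun t ht =>
    deriv_sub (hd1 t ht) (hdr t ht)
  -- Part 1
  have part1 : ∀ t, 0 ≤ t → L1 * deriv e t = -(R1 + κ4) * e t := by
    intro t ht
    have hx2 : x2 t ≠ 0 := (hx2pos t ht).ne'
    have h1 := hode1 t ht
    have h2 : x2 t * u1 t = x5 t + κ4 * e t + (-L1 * deriv r t - R1 * r t) := by
      rw [hu1 t ht]
      field_simp
      simp only [he, hr]
      ring
    rw [hderiv_e t ht]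
    rw [h2] at h1
    have : L1 * deriv x1 t - L1 * deriv r t = -(R1 + κ4) * e t := by
      have hrt : r t = -κ5 * (x2 t - x2s) := rfl
      have het : e t = x1 t - r t := rfl
      nlinarith [h1]
    linarith [this]
  -- derivative of e
  have a_pos : 0 < (R1 + κ4) / L1 := div_pos (by linarith) hL1
  set a : ℝ := (R1 + κ4) / L1 with ha
  have hde' : ∀ t, 0 ≤ t → HasDerivAt e (-a * e t) t := by
    intro t ht
    have h := (hde t ht).hasDerivAt
    have : deriv e t = -a * e t := by
      have := part1 t ht
      rw [ha]
      field_simp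
      linarith
    rwa [this] at h
  -- Part 2
  have part2 : ∀ t, 0 ≤ t → e t = e 0 * Real.exp (-(R1 + κ4) * t / L1) := by
    intro t ht
    set g : ℝ → ℝ := fun s => e s * Real.exp (a * s) with hg
    have hgd : ∀ s, 0 ≤ s → HasDerivAt g 0 s := by
      intro s hs
      have h1 : HasDerivAt (fun u : ℝ => Real.exp (a * u)) (Real.exp (a * s) * a) s := by
        simpa using ((hasDerivAt_id s).const_mul a).exp
      have h2 := (hde' s hs).mul h1
      have h0 : (-a * e s) * Real.exp (a * s) + e s * (Real.exp (a * s) * a) = 0 := by ring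
      exact h0 ▸ h2
    have hcont : ContinuousOn g (Set.Icc 0 t) := fun s hs =>
      ((hgd s hs.1).differentiableAt.continuousAt).continuousWithinAt
    have hkey : g t = g 0 := by
      rcases eq_or_lt_of_le ht with h | h
      · rw [← h]
      · exact constant_of_has_deriv_right_zero hcont
          (fun s hs => ((hgd s hs.1).hasDerivWithinAt)) t (Set.right_mem_Icc.2 ht)
    have hexp : Real.exp (a * t) ≠ 0 := Real.exp_ne_zero _
    have : e t * Real.exp (a * t) = e 0 := by simpa [hg] using hkey
    have : e t = e 0 * Real.exp (-(a * t)) := by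
      rw [Real.exp_neg]
      field_simp at this ⊢
      linarith [this]
    rw [this]
    congr 1
    rw [ha]
    field_simp
  refine ⟨part1, part2, ?_⟩
  have htend : Tendsto (fun t => e 0 * Real.exp (-(R1 + κ4) * t / L1)) atTop (𝓝 0) := by
    have h1 : Tendsto (fun t : ℝ => -(R1 + κ4) * t / L1) atTop atBot := by
      have : Tendsto (fun t : ℝ => (-(R1 + κ4) / L1) * t) atTop atBot :=
        tendsto_id.const_mul_atTop_of_neg (by
          apply div_neg_of_neg_of_pos <;> [linarith; exact hL1])
      refine this.congr fun t => by ring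
    have := Real.tendsto_exp_atBot.comp h1
    simpa using this.const_mul (e 0)
  refine Tendsto.congr' ?_ htend
  filter_upwards [eventually_ge_atTop (0 : ℝ)] with t ht
  exact (part2 t ht).symm
end

section
/- Let L1, C1 > 0, R1, G ≥ 0, κ4 > 0, κ5 ∈ ℝ, and x2⋆ ∈ ℝ. Let x1, x2, x3, x5, u1, u2 : [0,∞) → ℝ with x2 differentiable satisfying C1·x2'(t) = -G·x2(t) + x1(t)·u1(t) - x3(t)·u2(t), and suppose x2(t) > 0 and x2(t) - (L1·κ5/C1)·x1(t) ≠ 0 for all t. Define x1ref(t) := -κ5·(x2(t) - x2⋆) and x̃1(t) := x1(t) - x1ref(t). Then u1 satisfies the implicit control law u1(t) = (1/x2(t))·[x5(t) + κ4·x̃1(t) - L1·x1ref'(t) - R1·x1ref(t)] if and only if it satisfies the explicit state-feedback formula u1(t) = (x2(t) - (L1·κ5/C1)·x1(t))^{-1}·[x5(t) - R1·x1ref(t) + κ4·x̃1(t) - (L1·κ5/C1)·(x3(t)·u2(t) + G·x2(t))]. Moreover x1ref'(t) = -(κ5/C1)·(x1(t)·u1(t) - x3(t)·u2(t) - G·x2(t)).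 -/
/-- Corollary 1: equivalence between the implicit Σ2 control law (involving the
derivative of `x1ref`) and its implementable explicit state-feedback
realization; moreover `x1ref' = -(κ5/C1)·(x1·u1 - x3·u2 - G·x2)`. -/
theorem stmt_16
    (L1 C1 R1 G κ4 κ5 x2s : ℝ)
    (hL1 : 0 < L1) (hC1 : 0 < C1) (hR1 : 0 ≤ R1) (hG : 0 ≤ G) (hκ4 : 0 < κ4)
    (x1 x2 x3 x5 u1 u2 : ℝ → ℝ)
    (hd2 : ∀ t, 0 ≤ t → DifferentiableAt ℝ x2 t)
    (hode2 : ∀ t, 0 ≤ t →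
      C1 * deriv x2 t = -G * x2 t + x1 t * u1 t - x3 t * u2 t)
    (hx2pos : ∀ t, 0 ≤ t → 0 < x2 t)
    (hfac : ∀ t, 0 ≤ t → x2 t - (L1 * κ5 / C1) * x1 t ≠ 0) :
    (∀ t, 0 ≤ t →
      deriv (fun s => -κ5 * (x2 s - x2s)) t
        = -(κ5 / C1) * (x1 t * u1 t - x3 t * u2 t - G * x2 t)) ∧
    (∀ t, 0 ≤ t →
      (u1 t = (1 / x2 t) * (x5 t + κ4 * (x1 t - (-κ5 * (x2 t - x2s)))
          - L1 * deriv (fun s => -κ5 * (x2 s - x2s)) t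
          - R1 * (-κ5 * (x2 t - x2s)))
        ↔
       u1 t = (x2 t - (L1 * κ5 / C1) * x1 t)⁻¹
          * (x5 t - R1 * (-κ5 * (x2 t - x2s))
            + κ4 * (x1 t - (-κ5 * (x2 t - x2s)))
            - (L1 * κ5 / C1) * (x3 t * u2 t + G * x2 t)))) := by
  have hC1' : C1 ≠ 0 := ne_of_gt hC1
  have hder : ∀ t, 0 ≤ t →
      deriv (fun s => -κ5 * (x2 s - x2s)) t
        = -(κ5 / C1) * (x1 t * u1 t - x3 t * u2 t - G * x2 t) := by
    intro t ht
    have h1 : deriv (fun s => -κ5 * (x2 s - x2s)) t = -κ5 * deriv (fun s => x2 s - x2s) t := by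
      apply deriv_const_mul
      exact (hd2 t ht).sub_const _
    have h2 : deriv (fun s => x2 s - x2s) t = deriv x2 t := by
      simp [deriv_sub_const]
    have h3 : deriv x2 t = (-G * x2 t + x1 t * u1 t - x3 t * u2 t) / C1 := by
      rw [eq_div_iff hC1']
      linarith [hode2 t ht]
    rw [h1, h2, h3]
    ring
  refine ⟨hder, fun t ht => ?_⟩
  rw [hder t ht]
  have ha : x2 t ≠ 0 := ne_of_gt (hx2pos t ht)
  have hb := hfac t ht
  constructor <;> intro h
  · rw [one_div, eq_comm, inv_mul_eq_iff_eq_mul₀ ha] at h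
    rw [eq_comm, inv_mul_eq_iff_eq_mul₀ hb]
    linear_combination h
  · rw [eq_comm, inv_mul_eq_iff_eq_mul₀ hb] at h
    rw [one_div, eq_comm, inv_mul_eq_iff_eq_mul₀ ha]
    linear_combination h
end
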